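/- For nonnegative vectors x, y ∈ ℝ₊ⁿ, one has ‖x‖ ≤ ‖y‖ for every symmetric norm ‖·‖ on ℝⁿ if and only if the Ky Fan inequalities ∑_{i=1}^k xᵢ↓ ≤ ∑_{i=1}^k yᵢ↓ hold for every k = 1,…,n (i.e., x is weakly majorized by y). -/

import Mathlib

open Finset

/-- The symmetric matrix `Θ_x`: off-diagonal entries `(xᵢ+xⱼ)/(2n)`, diagonal chosen
so that every row sums to zero. -/
noncomputable def Theta (n : ℕ) (x : Fin n → ℝ) : Matrix (Fin n) (Fin n) ℝ :=
  fun i j =>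
    if i = j then -(∑ k ∈ Finset.univ.erase i, (x i + x k) / (2 * n))
    else (x i + x j) / (2 * n)

/-- `I_x = Iₙ + Θ_x`. -/
noncomputable def Imat (n : ℕ) (x : Fin n → ℝ) : Matrix (Fin n) (Fin n) ℝ :=
  1 + Theta n x

/-- `E f`: the constant vector whose entries all equal the mean of `f`. -/
noncomputable def meanVec (n : ℕ) (f : Fin n → ℝ) : Fin n → ℝ :=
  fun _ => (∑ i, f i) / n

/-- The sup norm `‖x‖_∞`. -/
noncomputable def linf (n : ℕ) (x : Fin n → ℝ) : ℝ :=
  sSup (Set.range fun i => |x i|)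

/-- The Ky Fan `k`-norm: the sum of the `k` largest absolute values of the entries,
i.e. the maximum of `∑_{i ∈ S} |xᵢ|` over subsets `S` of cardinality `k`. -/
noncomputable def kyFan (n k : ℕ) (x : Fin n → ℝ) : ℝ :=
  sSup ((fun S : Finset (Fin n) => ∑ i ∈ S, |x i|) '' {S | S.card = k})

/-- The dual Ky Fan `k`-norm: `max(‖x‖_∞, ‖x‖₁ / k)`. -/
noncomputable def kyFanDual (n k : ℕ) (x : Fin n → ℝ) : ℝ :=
  max (linf n x) ((∑ i, |x i|) / k)

/-- A symmetric norm on `ℝⁿ`: a norm invariant under coordinate permutations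
and sign changes. -/
structure IsSymmNorm (n : ℕ) (N : (Fin n → ℝ) → ℝ) : Prop where
  add_le : ∀ x y, N (x + y) ≤ N x + N y
  smul : ∀ (c : ℝ) (x), N (c • x) = |c| * N x
  pos : ∀ x, x ≠ 0 → 0 < N x
  perm : ∀ (σ : Equiv.Perm (Fin n)) (x), N (x ∘ σ) = N x
  sign : ∀ (ε x : Fin n → ℝ), (∀ i, ε i = 1 ∨ ε i = -1) → N (ε * x) = N x

section Aux
variable {n : ℕ}

noncomputable def cardSets (n k : ℕ) : Finset (Finset (Fin n)) :=
  Finset.univ.filter fun S => S.card = k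

lemma cardSets_nonempty {k : ℕ} (hk : k ≤ n) : (cardSets n k).Nonempty := by
  obtain ⟨S, -, hS⟩ := Finset.exists_subset_card_eq (s := (Finset.univ : Finset (Fin n)))
    (by simpa using hk)
  exact ⟨S, by simp [cardSets, hS]⟩

lemma kyFan_eq {k : ℕ} (hk : k ≤ n) (x : Fin n → ℝ) :
    kyFan n k x = (cardSets n k).sup' (cardSets_nonempty hk) fun S => ∑ i ∈ S, |x i| := by
  have hset : {S : Finset (Fin n) | S.card = k} = ↑(cardSets n k) := by
    ext S; simp [cardSets]
  rw [kyFan, hset, ← Finset.sup'_eq_csSup_image]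

lemma le_kyFan {k : ℕ} (hk : k ≤ n) (x : Fin n → ℝ) {S : Finset (Fin n)} (hS : S.card = k) :
    ∑ i ∈ S, |x i| ≤ kyFan n k x := by
  rw [kyFan_eq hk]
  exact Finset.le_sup' (fun S => ∑ i ∈ S, |x i|) (show S ∈ cardSets n k by simp [cardSets, hS])

lemma kyFan_le {k : ℕ} (hk : k ≤ n) (x : Fin n → ℝ) {r : ℝ}
    (h : ∀ S : Finset (Fin n), S.card = k → ∑ i ∈ S, |x i| ≤ r) : kyFan n k x ≤ r := by
  rw [kyFan_eq hk]
  exact Finset.sup'_le _ _ fun S hS => h S (by simpa [cardSets] using hS)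

lemma kyFan_perm {k : ℕ} (hk : k ≤ n) (x : Fin n → ℝ) (σ : Equiv.Perm (Fin n)) :
    kyFan n k (x ∘ σ) = kyFan n k x := by
  have key : ∀ (z : Fin n → ℝ) (σ : Equiv.Perm (Fin n)), kyFan n k (z ∘ σ) ≤ kyFan n k z := by
    intro z σ
    refine kyFan_le hk _ fun S hS => ?_
    have h1 : ∑ i ∈ S.image σ, |z i| = ∑ i ∈ S, |(z ∘ σ) i| :=
      Finset.sum_image (fun a _ b _ h => σ.injective h)
    rw [← h1]
    exact le_kyFan hk z (by rw [Finset.card_image_of_injective _ σ.injective, hS])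
  refine le_antisymm (key x σ) ?_
  have h2 := key (x ∘ σ) σ⁻¹
  have h3 : (x ∘ σ) ∘ ⇑σ⁻¹ = x := by
    funext i; simp
  rwa [h3] at h2

lemma exists_antitone_comp (g : Fin n → ℝ) : ∃ σ : Equiv.Perm (Fin n), Antitone (g ∘ σ) := by
  refine ⟨Tuple.sort (-g), fun i j hij => ?_⟩
  have := Tuple.monotone_sort (-g) hij
  simp only [Function.comp_apply, Pi.neg_apply] at this ⊢
  linarith

lemma strictMono_le_apply {k : ℕ} {f : Fin k → Fin n} (hf : StrictMono f) (j : Fin k) :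
    (j : ℕ) ≤ (f j : ℕ) := by
  have H : ∀ m : ℕ, ∀ j : Fin k, (j : ℕ) = m → m ≤ (f j : ℕ) := by
    intro m
    induction m with
    | zero => intro j _; exact Nat.zero_le _
    | succ m ih =>
      intro j hj
      have hik := j.isLt
      have hm : m < k := by omega
      have hlt : (⟨m, hm⟩ : Fin k) < j := by rw [Fin.lt_def]; simp [hj]
      have h2 := hf hlt
      have h3 := ih ⟨m, hm⟩ rfl
      rw [Fin.lt_def] at h2
      omega
  exact H _ j rfl


lemma sum_subset_le_sorted {k : ℕ} (hk : k ≤ n) {v : Fin n → ℝ} (hv : Antitone v)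
    {S : Finset (Fin n)} (hS : S.card = k) :
    ∑ i ∈ S, v i ≤ ∑ j : Fin k, v (Fin.castLE hk j) := by
  set e := S.orderIsoOfFin hS with he
  have h1 : ∑ i ∈ S, v i = ∑ j : Fin k, v (e j) := by
    rw [← Finset.sum_coe_sort S v]
    exact (Fintype.sum_equiv e.toEquiv (fun j => v (e j)) (fun i => v i) fun j => rfl).symm
  rw [h1]
  refine Finset.sum_le_sum fun j _ => hv ?_
  have hsm : StrictMono fun j : Fin k => ((e j : Fin n)) := fun a b hab => by
    exact_mod_cast e.strictMono hab
  have := strictMono_le_apply hsm j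
  rw [Fin.le_def]
  simpa using this

lemma kyFan_sorted {k : ℕ} (hk : k ≤ n) {v : Fin n → ℝ} (hv : Antitone v)
    (h0 : ∀ i, 0 ≤ v i) :
    kyFan n k v = ∑ j : Fin k, v (Fin.castLE hk j) := by
  refine le_antisymm (kyFan_le hk _ fun S hS => ?_) ?_
  · have : ∑ i ∈ S, |v i| = ∑ i ∈ S, v i :=
      Finset.sum_congr rfl fun i _ => abs_of_nonneg (h0 i)
    rw [this]
    exact sum_subset_le_sorted hk hv hS
  · have hinj : Function.Injective (Fin.castLE hk) := Fin.castLE_injective hk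
    have hcard : ((Finset.univ : Finset (Fin k)).image (Fin.castLE hk)).card = k := by
      rw [Finset.card_image_of_injective _ hinj]; simp
    have h2 := le_kyFan hk v hcard
    have h3 : ∑ i ∈ (Finset.univ : Finset (Fin k)).image (Fin.castLE hk), |v i|
        = ∑ j : Fin k, v (Fin.castLE hk j) := by
      rw [Finset.sum_image (fun a _ b _ h => hinj h)]
      exact Finset.sum_congr rfl fun j _ => abs_of_nonneg (h0 _)
    rwa [h3] at h2

lemma abel_le {m : ℕ} {B U W : ℕ → ℝ} (hB : Antitone B) (hB0 : ∀ i, 0 ≤ B i)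
    (hUW : ∀ k, k ≤ m → ∑ j ∈ Finset.range k, U j ≤ ∑ j ∈ Finset.range k, W j) :
    ∑ j ∈ Finset.range m, B j * U j ≤ ∑ j ∈ Finset.range m, B j * W j := by
  have h1 := Finset.sum_range_by_parts B U m
  have h2 := Finset.sum_range_by_parts B W m
  simp only [smul_eq_mul] at h1 h2
  rw [h1, h2]
  have key : ∀ i ∈ Finset.range (m - 1),
      (B (i+1) - B i) * (∑ j ∈ Finset.range (i+1), W j)
        ≤ (B (i+1) - B i) * (∑ j ∈ Finset.range (i+1), U j) := by
    intro i hi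
    have hc : B (i+1) - B i ≤ 0 := by
      have := hB (Nat.le_succ i); linarith
    have hrange := Finset.mem_range.mp hi
    exact mul_le_mul_of_nonpos_left (hUW (i+1) (by omega)) hc
  have h3 : B (m-1) * (∑ j ∈ Finset.range m, U j) ≤ B (m-1) * (∑ j ∈ Finset.range m, W j) :=
    mul_le_mul_of_nonneg_left (hUW m le_rfl) (hB0 _)
  exact sub_le_sub h3 (Finset.sum_le_sum key)

lemma abel_fin {b u w : Fin n → ℝ} (hb : Antitone b) (hb0 : ∀ i, 0 ≤ b i)
    (h : ∀ k, (hk : k ≤ n) → ∑ j : Fin k, u (Fin.castLE hk j) ≤ ∑ j : Fin k, w (Fin.castLE hk j)) :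
    ∑ j, b j * u j ≤ ∑ j, b j * w j := by
  classical
  set B : ℕ → ℝ := fun j => if hj : j < n then b ⟨j, hj⟩ else 0 with hBdef
  set U : ℕ → ℝ := fun j => if hj : j < n then u ⟨j, hj⟩ else 0 with hUdef
  set W : ℕ → ℝ := fun j => if hj : j < n then w ⟨j, hj⟩ else 0 with hWdef
  have hBanti : Antitone B := by
    intro i j hij
    by_cases hjn : j < n
    · have hin : i < n := lt_of_le_of_lt hij hjn
      simp only [hBdef, dif_pos hjn, dif_pos hin]
      exact hb hij
    · simp only [hBdef, dif_neg hjn]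
      by_cases hin : i < n
      · simp only [dif_pos hin]; exact hb0 _
      · simp [dif_neg hin]
  have hB0 : ∀ i, 0 ≤ B i := by
    intro i
    by_cases hin : i < n
    · simp only [hBdef, dif_pos hin]; exact hb0 _
    · simp [hBdef, dif_neg hin]
  have hconv : ∀ (f : Fin n → ℝ) (F : ℕ → ℝ),
      (F = fun j => if hj : j < n then f ⟨j, hj⟩ else 0) →
      ∀ k, (hk : k ≤ n) → ∑ j ∈ Finset.range k, F j = ∑ j : Fin k, f (Fin.castLE hk j) := by
    intro f F hF k hk
    rw [← Fin.sum_univ_eq_sum_range]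
    refine Finset.sum_congr rfl fun j _ => ?_
    have hjn : (j : ℕ) < n := lt_of_lt_of_le j.isLt hk
    rw [hF]
    simp only [dif_pos hjn]
    rfl
  have hUW : ∀ k, k ≤ n → ∑ j ∈ Finset.range k, U j ≤ ∑ j ∈ Finset.range k, W j := by
    intro k hk
    rw [hconv u U hUdef k hk, hconv w W hWdef k hk]
    exact h k hk
  have habel := abel_le hBanti hB0 hUW
  have hBU : ∑ j ∈ Finset.range n, B j * U j = ∑ j, b j * u j := by
    rw [← Fin.sum_univ_eq_sum_range]
    refine Finset.sum_congr rfl fun j _ => ?_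
    simp only [hBdef, hUdef, dif_pos j.isLt, Fin.eta]
  have hBW : ∑ j ∈ Finset.range n, B j * W j = ∑ j, b j * w j := by
    rw [← Fin.sum_univ_eq_sum_range]
    refine Finset.sum_congr rfl fun j _ => ?_
    simp only [hBdef, hWdef, dif_pos j.isLt, Fin.eta]
  rw [hBU, hBW] at habel
  exact habel


lemma key_pairing {x y : Fin n → ℝ} (hx : ∀ i, 0 ≤ x i) (hy : ∀ i, 0 ≤ y i)
    (h : ∀ k, 1 ≤ k → k ≤ n → kyFan n k x ≤ kyFan n k y) (c : Fin n → ℝ) :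
    ∃ (ε : Fin n → Bool) (σ : Equiv.Perm (Fin n)),
      ∑ i, c i * x i ≤ ∑ i, c i * ((if ε i then (1:ℝ) else -1) * y (σ i)) := by
  classical
  obtain ⟨πc, hπc⟩ := exists_antitone_comp (fun i => |c i|)
  obtain ⟨πx, hπx⟩ := exists_antitone_comp x
  obtain ⟨πy, hπy⟩ := exists_antitone_comp y
  set b : Fin n → ℝ := fun j => |c (πc j)| with hbdef
  set u : Fin n → ℝ := x ∘ πx with hudef
  set w : Fin n → ℝ := y ∘ πy with hwdef
  have hb0 : ∀ j, 0 ≤ b j := fun j => abs_nonneg _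
  have hu0 : ∀ j, 0 ≤ u j := fun j => hx _
  have hw0 : ∀ j, 0 ≤ w j := fun j => hy _
  have hps : ∀ k, (hk : k ≤ n) →
      ∑ j : Fin k, u (Fin.castLE hk j) ≤ ∑ j : Fin k, w (Fin.castLE hk j) := by
    intro k hk
    rcases Nat.eq_zero_or_pos k with rfl | hk1
    · simp
    · have e1 : kyFan n k u = ∑ j : Fin k, u (Fin.castLE hk j) := kyFan_sorted hk hπx hu0
      have e2 : kyFan n k w = ∑ j : Fin k, w (Fin.castLE hk j) := kyFan_sorted hk hπy hw0
      rw [← e1, ← e2, hudef, hwdef, kyFan_perm hk, kyFan_perm hk]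
      exact h k hk1 hk
  have habel : ∑ j, b j * u j ≤ ∑ j, b j * w j := abel_fin hπc hb0 hps
  have hmono : Monovary b u := by
    intro i j hij
    rcases le_or_gt i j with hle | hlt
    · exact absurd (hπx hle) (not_le.mpr hij)
    · exact hπc hlt.le
  set τ : Equiv.Perm (Fin n) := πc.trans πx.symm with hτ
  have hr1 : ∑ i, c i * x i ≤ ∑ i, |c i| * x i :=
    Finset.sum_le_sum fun i _ => mul_le_mul_of_nonneg_right (le_abs_self _) (hx i)
  have hr2 : ∑ i, |c i| * x i = ∑ j, b j * u (τ j) := by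
    rw [← Equiv.sum_comp πc (fun i => |c i| * x i)]
    refine Finset.sum_congr rfl fun j _ => ?_
    have : u (τ j) = x (πc j) := by
      simp [hudef, hτ, Function.comp]
    rw [this]
  have hr3 : ∑ j, b j * u (τ j) ≤ ∑ j, b j * u j := by
    have := hmono.sum_smul_comp_perm_le_sum_smul (σ := τ)
    simpa [smul_eq_mul] using this
  refine ⟨fun i => decide (0 ≤ c i), πc.symm.trans πy, ?_⟩
  have hfin : ∑ i, c i * ((if decide (0 ≤ c i) then (1:ℝ) else -1) * y ((πc.symm.trans πy) i))
      = ∑ j, b j * w j := by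
    rw [← Equiv.sum_comp πc
      (fun i => c i * ((if decide (0 ≤ c i) then (1:ℝ) else -1) * y ((πc.symm.trans πy) i)))]
    refine Finset.sum_congr rfl fun j _ => ?_
    have h1 : (πc.symm.trans πy) (πc j) = πy j := by simp
    rw [h1]
    have hdec : (if decide (0 ≤ c (πc j)) then (1:ℝ) else -1)
        = if 0 ≤ c (πc j) then (1:ℝ) else -1 := by simp
    rw [hdec]
    rcases le_or_gt 0 (c (πc j)) with hc | hc
    · rw [if_pos hc, one_mul]
      simp only [hbdef, hwdef, Function.comp_apply]
      rw [abs_of_nonneg hc]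
    · rw [if_neg (not_le.mpr hc)]
      simp only [hbdef, hwdef, Function.comp_apply]
      rw [abs_of_neg hc]
      ring
  rw [hfin]
  calc ∑ i, c i * x i ≤ ∑ i, |c i| * x i := hr1
    _ = ∑ j, b j * u (τ j) := hr2
    _ ≤ ∑ j, b j * u j := hr3
    _ ≤ ∑ j, b j * w j := habel

end Aux

section Main
variable {n : ℕ}

lemma isSymmNorm_kyFan {k : ℕ} (hk1 : 1 ≤ k) (hkn : k ≤ n) : IsSymmNorm n (kyFan n k) := by
  constructor
  · intro a b
    refine kyFan_le hkn _ fun S hS => ?_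
    calc ∑ i ∈ S, |(a + b) i| ≤ ∑ i ∈ S, (|a i| + |b i|) :=
        Finset.sum_le_sum fun i _ => abs_add_le _ _
      _ = ∑ i ∈ S, |a i| + ∑ i ∈ S, |b i| := Finset.sum_add_distrib
      _ ≤ kyFan n k a + kyFan n k b := add_le_add (le_kyFan hkn a hS) (le_kyFan hkn b hS)
  · intro cc a
    rw [kyFan_eq hkn, kyFan_eq hkn, Finset.comp_sup'_eq_sup'_comp _ (fun r => |cc| * r)
      (fun p q => mul_max_of_nonneg p q (abs_nonneg cc))]
    refine Finset.sup'_congr _ rfl fun S hS => ?_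
    show ∑ i ∈ S, |(cc • a) i| = |cc| * ∑ i ∈ S, |a i|
    rw [Finset.mul_sum]
    exact Finset.sum_congr rfl fun i _ => by simp [abs_mul]
  · intro a ha
    obtain ⟨i, hi⟩ := Function.ne_iff.mp ha
    have hcard : k - 1 ≤ (Finset.univ.erase i).card := by
      rw [Finset.card_erase_of_mem (Finset.mem_univ i)]
      simp only [Finset.card_univ, Fintype.card_fin]
      omega
    obtain ⟨T, hT, hTcard⟩ := Finset.exists_subset_card_eq hcard
    have hiT : i ∉ T := fun hmem => (Finset.mem_erase.mp (hT hmem)).1 rfl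
    have hScard : (insert i T).card = k := by
      rw [Finset.card_insert_of_notMem hiT, hTcard]; omega
    have h1 : 0 < |a i| := abs_pos.mpr hi
    have h2 : |a i| ≤ ∑ j ∈ insert i T, |a j| := by
      rw [Finset.sum_insert hiT]
      have h3 : 0 ≤ ∑ j ∈ T, |a j| := Finset.sum_nonneg fun j _ => abs_nonneg _
      linarith
    exact lt_of_lt_of_le (lt_of_lt_of_le h1 h2) (le_kyFan hkn a hScard)
  · intro σ a; exact kyFan_perm hkn a σ
  · intro ε a hε
    rw [kyFan_eq hkn, kyFan_eq hkn]
    refine Finset.sup'_congr _ rfl fun S hS => Finset.sum_congr rfl fun i _ => ?_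
    rcases hε i with h | h <;> simp [Pi.mul_apply, h]

lemma symmNorm_convexOn {N : (Fin n → ℝ) → ℝ} (hN : IsSymmNorm n N) :
    ConvexOn ℝ Set.univ N := by
  refine ⟨convex_univ, fun p _ q _ a b ha hb hab => ?_⟩
  calc N (a • p + b • q) ≤ N (a • p) + N (b • q) := hN.add_le _ _
    _ = |a| * N p + |b| * N q := by rw [hN.smul, hN.smul]
    _ = a * N p + b * N q := by rw [abs_of_nonneg ha, abs_of_nonneg hb]
    _ = a • N p + b • N q := by simp [smul_eq_mul]

noncomputable def signPerm (n : ℕ) (y : Fin n → ℝ)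
    (p : (Fin n → Bool) × Equiv.Perm (Fin n)) : Fin n → ℝ :=
  (fun i => if p.1 i then (1:ℝ) else -1) * (y ∘ p.2)

/-- Ky Fan's theorem: for nonnegative vectors `x, y`, `N x ≤ N y` for every symmetric
norm `N` iff `x` is weakly majorized by `y` (all Ky Fan `k`-norm inequalities hold). -/
theorem stmt_3 (n : ℕ) (x y : Fin n → ℝ) (hx : ∀ i, 0 ≤ x i) (hy : ∀ i, 0 ≤ y i) :
    (∀ N : (Fin n → ℝ) → ℝ, IsSymmNorm n N → N x ≤ N y) ↔
      (∀ k, 1 ≤ k → k ≤ n → kyFan n k x ≤ kyFan n k y) := by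
  constructor
  · intro hN k hk1 hkn
    exact hN (kyFan n k) (isSymmNorm_kyFan hk1 hkn)
  · intro hw N hNs
    classical
    have hmem : x ∈ convexHull ℝ (Set.range (signPerm n y)) := by
      by_contra hxE
      have hfin : (Set.range (signPerm n y)).Finite := Set.finite_range _
      have hcl : IsClosed (convexHull ℝ (Set.range (signPerm n y))) :=
        (hfin.isCompact_convexHull (𝕜 := ℝ)).isClosed
      obtain ⟨f, u0, hfu, hux⟩ := geometric_hahn_banach_closed_point
        (convex_convexHull ℝ _) hcl hxE
      set c : Fin n → ℝ := fun i => f (fun j => if i = j then (1:ℝ) else 0) with hc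
      have hf_eq : ∀ v : Fin n → ℝ, f v = ∑ i, c i * v i := by
        intro v
        conv_lhs => rw [pi_eq_sum_univ v]
        rw [map_sum]
        refine Finset.sum_congr rfl fun i _ => ?_
        rw [map_smul, smul_eq_mul, mul_comm]
      obtain ⟨ε, σ, hle⟩ := key_pairing hx hy hw c
      have heE : signPerm n y (ε, σ) ∈ Set.range (signPerm n y) := ⟨(ε, σ), rfl⟩
      have h1 : f (signPerm n y (ε, σ)) < u0 := hfu _ (subset_convexHull ℝ _ heE)
      have h2 : f x ≤ f (signPerm n y (ε, σ)) := by
        rw [hf_eq, hf_eq]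
        exact hle
      linarith
    obtain ⟨z, ⟨p, rfl⟩, hle⟩ := (symmNorm_convexOn hNs).exists_ge_of_mem_convexHull
      (Set.subset_univ _) hmem
    calc N x ≤ N (signPerm n y p) := hle
      _ = N (y ∘ p.2) := hNs.sign _ _ (fun i => by by_cases h : p.1 i <;> simp [h])
      _ = N y := hNs.perm p.2 y

end Main
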